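/- Let a₁, …, a_{n+1} ∈ ℤⁿ generate a rank-n sublattice, with a_{n+1} primitive. Set dᵢ = |det((a_j)_{j≠i})|. Then gcd(d₁, …, d_n) divides d_{n+1}; equivalently gcd(d₁,…,d_n) = gcd(d₁,…,d_{n+1}). -/

import Mathlib

/-- The `n × n` integer matrix whose columns are the vectors `a j` for `j ≠ i`. -/
def omitMatrix {n : ℕ} (a : Fin (n + 1) → (Fin n → ℤ)) (i : Fin (n + 1)) :
    Matrix (Fin n) (Fin n) ℤ :=
  Matrix.of fun r c => a (i.succAbove c) r


-- gcd over a mapped finset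
lemma gcd_map_emb {β γ : Type*} [CommMonoidWithZero γ] [NormalizedGCDMonoid γ]
    {α : Type*} (s : Finset α) (e : α ↪ β) (f : β → γ) :
    (s.map e).gcd f = s.gcd (f ∘ e) := by
  simp [Finset.gcd, Finset.fold_map]

lemma key_succAbove {n : ℕ} (i k : Fin n) :
    (i.castSucc).succAbove (Fin.rev ((i.rev).cycleRange k.rev)) =
      if k = i then Fin.last n else k.castSucc := by
  rw [Fin.succAbove_rev_right, Fin.rev_castSucc, Fin.succAbove_cycleRange]
  rcases eq_or_ne k i with h | h
  · subst h
    rw [Equiv.swap_apply_right]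
    simp
  · rw [Equiv.swap_apply_of_ne_of_ne (Fin.succ_ne_zero _)
      (by simpa using fun hh => h (Fin.rev_injective hh))]
    rw [Fin.rev_succ, Fin.rev_rev]
    exact (if_neg h).symm

lemma key_dvd {n : ℕ} (a : Fin (n + 1) → (Fin n → ℤ))
    (hprim : Finset.univ.gcd (fun j => (a (Fin.last n) j).natAbs) = 1) :
    (Finset.univ.gcd fun i : Fin n => (omitMatrix a i.castSucc).det.natAbs) ∣
        (omitMatrix a (Fin.last n)).det.natAbs := by
  classical
  set M : Matrix (Fin n) (Fin n) ℤ := omitMatrix a (Fin.last n) with hM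
  set g : ℕ := Finset.univ.gcd fun i : Fin n => (omitMatrix a i.castSucc).det.natAbs with hg
  have hcol : ∀ i : Fin n, (g : ℤ) ∣ Matrix.cramer M (a (Fin.last n)) i := by
    intro i
    rw [Matrix.cramer_apply]
    set e : Equiv.Perm (Fin n) :=
      Fin.revPerm.trans ((i.rev).cycleRange.trans Fin.revPerm) with he
    have hupdate : M.updateCol i (a (Fin.last n)) =
        (omitMatrix a i.castSucc).submatrix id e := by
      ext r k
      rw [Matrix.updateCol_apply]
      have : (omitMatrix a i.castSucc).submatrix id e r k
          = a ((i.castSucc).succAbove (e k)) r := rfl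
      rw [this]
      have he2 : e k = Fin.rev ((i.rev).cycleRange k.rev) := rfl
      rw [he2, key_succAbove]
      rcases eq_or_ne k i with h | h
      · simp [h]
      · simp only [if_neg h]
        show M r k = _
        rw [hM]
        show a ((Fin.last n).succAbove k) r = _
        rw [Fin.succAbove_last]
    rw [hupdate, Matrix.det_permute']
    have h1 : (g : ℤ) ∣ (omitMatrix a i.castSucc).det :=
      Int.natCast_dvd.mpr (Finset.gcd_dvd (Finset.mem_univ i))
    exact Dvd.dvd.mul_left h1 _
  have hMd : ∀ j : Fin n, (g : ℤ) ∣ M.det * a (Fin.last n) j := by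
    intro j
    have hc := congrFun (Matrix.mulVec_cramer M (a (Fin.last n))) j
    have : (Matrix.mulVec M (Matrix.cramer M (a (Fin.last n)))) j
        = ∑ k, M j k * Matrix.cramer M (a (Fin.last n)) k := rfl
    rw [this] at hc
    rw [show M.det * a (Fin.last n) j = (M.det • a (Fin.last n)) j from rfl, ← hc]
    exact Finset.dvd_sum fun k _ => Dvd.dvd.mul_left (hcol k) _
  have hfin : g ∣ M.det.natAbs * Finset.univ.gcd (fun j => (a (Fin.last n) j).natAbs) := by
    rw [← normalize_eq M.det.natAbs, ← Finset.gcd_mul_left]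
    refine Finset.dvd_gcd fun j _ => ?_
    rw [← Int.natAbs_mul]
    exact Int.natCast_dvd.mp (by exact_mod_cast hMd j)
  rwa [hprim, mul_one] at hfin

/-- Let `a₁, …, a_{n+1} ∈ ℤⁿ` generate a rank-`n` sublattice, with
`a_{n+1}` primitive, and set `dᵢ = |det((a_j)_{j ≠ i})|`. Then `gcd(d₁, …, d_n)` divides
`d_{n+1}`; equivalently, `gcd(d₁, …, d_n) = gcd(d₁, …, d_{n+1})`. -/
theorem gcd_omit_divides_last (n : ℕ) (a : Fin (n + 1) → (Fin n → ℤ))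
    (hrank : Submodule.span ℚ (Set.range fun i => fun j => ((a i j : ℚ))) = ⊤)
    (hprim : Finset.univ.gcd (fun j => (a (Fin.last n) j).natAbs) = 1) :
    (Finset.univ.gcd fun i : Fin n => (omitMatrix a i.castSucc).det.natAbs) ∣
        (omitMatrix a (Fin.last n)).det.natAbs ∧
      (Finset.univ.gcd fun i : Fin n => (omitMatrix a i.castSucc).det.natAbs) =
        Finset.univ.gcd fun i : Fin (n + 1) => (omitMatrix a i).det.natAbs := by
  have hdvd := key_dvd a hprim
  refine ⟨hdvd, ?_⟩
  rw [Fin.univ_castSuccEmb, Finset.cons_eq_insert, Finset.gcd_insert, gcd_map_emb]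
  have hc : (Finset.univ.gcd
      ((fun i : Fin (n+1) => (omitMatrix a i).det.natAbs) ∘ Fin.castSuccEmb)) =
      Finset.univ.gcd fun i : Fin n => (omitMatrix a i.castSucc).det.natAbs := rfl
  rw [hc]
  exact ((gcd_eq_right_iff _ _ (normalize_eq _)).2 hdvd).symm
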